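/- Let n₁, n₂, n₃ be unit vectors in ℝ³ and η ∈ (0,1], and suppose pairwise joint measurements G^{ij} of the noisy spin-1/2 observables along n_i and n_j with sharpness η are given for all three pairs. If R₃(ρ) > 1 − η/3 for every qubit density matrix ρ, then √(1 + n₁·n₂) + √(1 + n₁·n₃) + √(1 + n₂·n₃) < √2. (Necessary condition for a state-independent violation of the LSW inequality.) -/

import Mathlib

open Matrix ComplexOrder

noncomputable section

abbrev Mat2 := Matrix (Fin 2) (Fin 2) ℂ

/-- Pauli matrix σ₁. -/
def σ1 : Mat2 := !![0, 1; 1, 0]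
/-- Pauli matrix σ₂. -/
def σ2 : Mat2 := !![0, -Complex.I; Complex.I, 0]
/-- Pauli matrix σ₃. -/
def σ3 : Mat2 := !![1, 0; 0, -1]

/-- σ·a for a real 3-vector a. -/
def pauli (a : Fin 3 → ℝ) : Mat2 := (a 0 : ℂ) • σ1 + (a 1 : ℂ) • σ2 + (a 2 : ℂ) • σ3

/-- Euclidean inner product on ℝ³. -/
def dot3 (a b : Fin 3 → ℝ) : ℝ := a 0 * b 0 + a 1 * b 1 + a 2 * b 2

/-- Euclidean norm on ℝ³. -/
def norm3 (a : Fin 3 → ℝ) : ℝ := Real.sqrt (dot3 a a)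

/-- A qubit effect: both `E` and `I - E` positive semidefinite. -/
def IsEffect (E : Mat2) : Prop := E.PosSemidef ∧ (1 - E).PosSemidef

/-- A qubit density matrix. -/
def IsDensity (ρ : Mat2) : Prop := ρ.PosSemidef ∧ ρ.trace = 1

/-- E₊ = (1/2)(I + η σ·n). -/
def Epos (η : ℝ) (n : Fin 3 → ℝ) : Mat2 := (1/2 : ℂ) • (1 + (η : ℂ) • pauli n)
/-- E₋ = (1/2)(I - η σ·n). -/
def Eneg (η : ℝ) (n : Fin 3 → ℝ) : Mat2 := (1/2 : ℂ) • (1 - (η : ℂ) • pauli n)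

/-- A pairwise joint measurement of the noisy spin-1/2 observables along nᵢ and nⱼ. -/
def IsJointMmt (η : ℝ) (ni nj : Fin 3 → ℝ) (Gpp Gpm Gmp Gmm : Mat2) : Prop :=
  IsEffect Gpp ∧ IsEffect Gpm ∧ IsEffect Gmp ∧ IsEffect Gmm ∧
  Gpp + Gpm = Epos η ni ∧ Gmp + Gmm = Eneg η ni ∧
  Gpp + Gmp = Epos η nj ∧ Gpm + Gmm = Eneg η nj

/-- Average anticorrelation probability R₃(ρ), given the anticorrelation effects of the
three pairwise joint measurements. -/
def R3 (ρ G12pm G12mp G13pm G13mp G23pm G23mp : Mat2) : ℝ :=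
  (1/3) * ((ρ * (G12pm + G12mp)).trace.re + (ρ * (G13pm + G13mp)).trace.re +
    (ρ * (G23pm + G23mp)).trace.re)

/-- Parametric joint-measurement family. -/
def Gpp (η : ℝ) (ni nj : Fin 3 → ℝ) (α : ℝ) (a : Fin 3 → ℝ) : Mat2 :=
  (1/2 : ℂ) • (((α/2 : ℝ) : ℂ) • (1 : Mat2) + pauli ((1/2 : ℝ) • (η • (ni + nj) - a)))
def Gpm (η : ℝ) (ni nj : Fin 3 → ℝ) (α : ℝ) (a : Fin 3 → ℝ) : Mat2 :=
  (1/2 : ℂ) • (((1 - α/2 : ℝ) : ℂ) • (1 : Mat2) + pauli ((1/2 : ℝ) • (η • (ni - nj) + a)))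
def Gmp (η : ℝ) (ni nj : Fin 3 → ℝ) (α : ℝ) (a : Fin 3 → ℝ) : Mat2 :=
  (1/2 : ℂ) • (((1 - α/2 : ℝ) : ℂ) • (1 : Mat2) + pauli ((1/2 : ℝ) • (-(η • ni) + η • nj + a)))
def Gmm (η : ℝ) (ni nj : Fin 3 → ℝ) (α : ℝ) (a : Fin 3 → ℝ) : Mat2 :=
  (1/2 : ℂ) • (((α/2 : ℝ) : ℂ) • (1 : Mat2) + pauli ((1/2 : ℝ) • (-(η • (ni + nj)) - a)))

/-- Trine directions in the ZX plane. -/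
def tn1 : Fin 3 → ℝ := ![0, 0, 1]
def tn2 : Fin 3 → ℝ := ![Real.sqrt 3 / 2, 0, -(1/2)]
def tn3 : Fin 3 → ℝ := ![-(Real.sqrt 3 / 2), 0, -(1/2)]

/-- sign of a Boolean, as ±1. -/
def sgn (b : Bool) : ℝ := if b then 1 else -1

/-- m_X = Σₖ Xₖ nₖ. -/
def mvec {N : ℕ} (n : Fin N → Fin 3 → ℝ) (X : Fin N → Bool) : Fin 3 → ℝ :=
  ∑ k, sgn (X k) • n k

/-- Joint measurability of the N noisy qubit observables. -/
def JointlyMeasurable {N : ℕ} (η : ℝ) (n : Fin N → Fin 3 → ℝ) : Prop :=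
  ∃ E : (Fin N → Bool) → Mat2,
    (∀ X, IsEffect (E X)) ∧ (∑ X, E X) = 1 ∧
    (∀ k, ∑ X ∈ Finset.univ.filter (fun X => X k = true), E X = Epos η (n k)) ∧
    (∀ k, ∑ X ∈ Finset.univ.filter (fun X => X k = false), E X = Eneg η (n k))



/-! ### Auxiliary lemmas -/

lemma pauli_apply' (n : Fin 3 → ℝ) :
    pauli n = !![(n 2 : ℂ), (n 0 : ℂ) - (n 1 : ℂ)*Complex.I;
                 (n 0 : ℂ) + (n 1 : ℂ)*Complex.I, -(n 2 : ℂ)] := by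
  ext i j
  fin_cases i <;> fin_cases j <;> simp [pauli, σ1, σ2, σ3] <;> ring

/-- Bloch vector of a 2×2 matrix. -/
def bloch (M : Mat2) : Fin 3 → ℝ :=
  ![2*(M 0 1).re, -2*(M 0 1).im, (M 0 0).re - (M 1 1).re]

lemma psd2 (M : Mat2) (h : M.PosSemidef) :
    Real.sqrt (dot3 (bloch M) (bloch M)) ≤ M.trace.re := by
  have h00 : 0 ≤ M 0 0 := by
    have := h.dotProduct_mulVec_nonneg (Pi.single 0 1)
    simpa [dotProduct, Matrix.mulVec, Pi.single_apply, Fin.sum_univ_two] using this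
  have h11 : 0 ≤ M 1 1 := by
    have := h.dotProduct_mulVec_nonneg (Pi.single 1 1)
    simpa [dotProduct, Matrix.mulVec, Pi.single_apply, Fin.sum_univ_two] using this
  have h10 : M 1 0 = star (M 0 1) := by
    conv_lhs => rw [← h.1]
    simp [Matrix.conjTranspose_apply]
  have hdet : 0 ≤ M.det := by
    rw [h.1.det_eq_prod_eigenvalues]
    refine Finset.prod_nonneg fun i _ => Complex.zero_le_real.mpr (h.eigenvalues_nonneg i)
  rw [Complex.le_def] at h00 h11 hdet
  simp only [Complex.zero_re, Complex.zero_im] at h00 h11 hdet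
  rw [Matrix.det_fin_two, h10] at hdet
  obtain ⟨ha, ha'⟩ := h00
  obtain ⟨hd, hd'⟩ := h11
  have hdetre := hdet.1
  simp only [Complex.sub_re, Complex.mul_re, Complex.star_def, Complex.conj_re,
    Complex.conj_im, ← ha', ← hd'] at hdetre
  have key : dot3 (bloch M) (bloch M) ≤ (M.trace.re)^2 := by
    simp only [dot3, bloch, Matrix.trace_fin_two, Complex.add_re]
    simp only [Matrix.cons_val_zero, Matrix.cons_val_one, Matrix.head_cons,
      Matrix.cons_val_two, Matrix.tail_cons]
    nlinarith [hdetre]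
  have htr : 0 ≤ M.trace.re := by
    simp only [Matrix.trace_fin_two, Complex.add_re]; linarith
  calc Real.sqrt (dot3 (bloch M) (bloch M)) ≤ Real.sqrt ((M.trace.re)^2) :=
        Real.sqrt_le_sqrt key
    _ = M.trace.re := Real.sqrt_sq htr

lemma dot3_self_nonneg (a : Fin 3 → ℝ) : 0 ≤ dot3 a a := by
  unfold dot3; nlinarith [sq_nonneg (a 0), sq_nonneg (a 1), sq_nonneg (a 2)]

lemma cs3 (a b : Fin 3 → ℝ) : dot3 a b ≤ Real.sqrt (dot3 a a * dot3 b b) := by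
  have h : (dot3 a b)^2 ≤ dot3 a a * dot3 b b := by
    unfold dot3
    nlinarith [sq_nonneg (a 0 * b 1 - a 1 * b 0), sq_nonneg (a 0 * b 2 - a 2 * b 0),
      sq_nonneg (a 1 * b 2 - a 2 * b 1)]
  calc dot3 a b ≤ |dot3 a b| := le_abs_self _
    _ = Real.sqrt ((dot3 a b)^2) := (Real.sqrt_sq_eq_abs _).symm
    _ ≤ _ := Real.sqrt_le_sqrt h

lemma tri3 (a b : Fin 3 → ℝ) :
    Real.sqrt (dot3 (a + b) (a + b)) ≤ Real.sqrt (dot3 a a) + Real.sqrt (dot3 b b) := by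
  have hA := dot3_self_nonneg a
  have hB := dot3_self_nonneg b
  have key : dot3 (a+b) (a+b) ≤ (Real.sqrt (dot3 a a) + Real.sqrt (dot3 b b))^2 := by
    have h1 : dot3 (a+b) (a+b) = dot3 a a + 2 * dot3 a b + dot3 b b := by
      simp only [dot3, Pi.add_apply]; ring
    have h2 : (Real.sqrt (dot3 a a) + Real.sqrt (dot3 b b))^2
        = dot3 a a + 2 * Real.sqrt (dot3 a a * dot3 b b) + dot3 b b := by
      rw [add_sq, Real.sq_sqrt hA, Real.sq_sqrt hB, Real.sqrt_mul hA]
      ring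
    have := cs3 a b
    linarith
  calc Real.sqrt (dot3 (a+b) (a+b))
      ≤ Real.sqrt ((Real.sqrt (dot3 a a) + Real.sqrt (dot3 b b))^2) := Real.sqrt_le_sqrt key
    _ = _ := Real.sqrt_sq (by positivity)

lemma trace_Epos' (η : ℝ) (n : Fin 3 → ℝ) : (Epos η n).trace = 1 := by
  simp [Epos, pauli_apply', Matrix.trace_fin_two, Matrix.smul_apply, Matrix.add_apply,
    Matrix.one_apply]

lemma trace_Eneg' (η : ℝ) (n : Fin 3 → ℝ) : (Eneg η n).trace = 1 := by
  simp [Eneg, pauli_apply', Matrix.trace_fin_two, Matrix.smul_apply, Matrix.sub_apply,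
    Matrix.one_apply]

lemma dot3_neg' (v : Fin 3 → ℝ) : dot3 (-v) (-v) = dot3 v v := by simp [dot3]

lemma dot3_smul' (c : ℝ) (v : Fin 3 → ℝ) : dot3 (c • v) (c • v) = c^2 * dot3 v v := by
  simp [dot3]; ring

lemma pair_bound (η : ℝ) (hη : 0 ≤ η) (ni nj : Fin 3 → ℝ)
    (Gpp' Gpm' Gmp' Gmm' : Mat2) (h : IsJointMmt η ni nj Gpp' Gpm' Gmp' Gmm') :
    η * Real.sqrt (dot3 (ni + nj) (ni + nj)) ≤ 2 * Gpp'.trace.re := by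
  obtain ⟨hPpp, hPpm, hPmp, hPmm, e1, e2, e3, e4⟩ := h
  have hpm : Gpm' = Epos η ni - Gpp' := eq_sub_of_add_eq' e1
  have hmm : Gmm' = Eneg η nj - Epos η ni + Gpp' := by
    have := eq_sub_of_add_eq' e4
    rw [this, hpm]; abel
  have hb : bloch Gmm' = bloch Gpp' - η • (ni + nj) := by
    funext k
    fin_cases k <;>
    · simp [bloch, hmm, Epos, Eneg, pauli_apply', Matrix.sub_apply, Matrix.add_apply,
        Matrix.smul_apply, Matrix.one_apply, Complex.mul_re, Complex.mul_im,
        Complex.add_re, Complex.add_im, Complex.sub_re, Complex.sub_im]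
      ring
  have htr : Gmm'.trace.re = Gpp'.trace.re := by
    rw [hmm, Matrix.trace_add, Matrix.trace_sub, trace_Epos', trace_Eneg']
    simp
  have hvec : bloch Gpp' + -(bloch Gmm') = η • (ni + nj) := by
    rw [hb]; abel
  have step1 : η * Real.sqrt (dot3 (ni + nj) (ni + nj))
      = Real.sqrt (dot3 (bloch Gpp' + -(bloch Gmm')) (bloch Gpp' + -(bloch Gmm'))) := by
    rw [hvec, dot3_smul', Real.sqrt_mul (sq_nonneg η), Real.sqrt_sq hη]
  have step2 := tri3 (bloch Gpp') (-(bloch Gmm'))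
  rw [dot3_neg'] at step2
  have b1 := psd2 Gpp' hPpp.1
  have b2 := psd2 Gmm' hPmm.1
  rw [step1]
  linarith

lemma anti_trace (η : ℝ) (ni nj : Fin 3 → ℝ) (Gpp' Gpm' Gmp' Gmm' : Mat2)
    (h : IsJointMmt η ni nj Gpp' Gpm' Gmp' Gmm') :
    (Gpm' + Gmp').trace.re = 2 - 2 * Gpp'.trace.re := by
  obtain ⟨_, _, _, _, e1, e2, e3, e4⟩ := h
  have hpm : Gpm' = Epos η ni - Gpp' := eq_sub_of_add_eq' e1
  have hmp : Gmp' = Epos η nj - Gpp' := eq_sub_of_add_eq' e3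
  rw [hpm, hmp, Matrix.trace_add, Matrix.trace_sub, Matrix.trace_sub, trace_Epos',
    trace_Epos']
  simp [Complex.sub_re, Complex.add_re]
  ring


/-- Necessary condition for a state-independent violation of the LSW inequality:
if R₃(ρ) > 1 - η/3 for every qubit density matrix ρ, then
√(1 + n₁·n₂) + √(1 + n₁·n₃) + √(1 + n₂·n₃) < √2. -/
theorem necessary_condition_state_independent
    (n₁ n₂ n₃ : Fin 3 → ℝ) (h1 : norm3 n₁ = 1) (h2 : norm3 n₂ = 1) (h3 : norm3 n₃ = 1)
    (η : ℝ) (hη : η ∈ Set.Ioc (0 : ℝ) 1)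
    (G12pp G12pm G12mp G12mm G13pp G13pm G13mp G13mm G23pp G23pm G23mp G23mm : Mat2)
    (h12 : IsJointMmt η n₁ n₂ G12pp G12pm G12mp G12mm)
    (h13 : IsJointMmt η n₁ n₃ G13pp G13pm G13mp G13mm)
    (h23 : IsJointMmt η n₂ n₃ G23pp G23pm G23mp G23mm)
    (hviol : ∀ ρ : Mat2, IsDensity ρ →
      R3 ρ G12pm G12mp G13pm G13mp G23pm G23mp > 1 - η / 3) :
    Real.sqrt (1 + dot3 n₁ n₂) + Real.sqrt (1 + dot3 n₁ n₃) + Real.sqrt (1 + dot3 n₂ n₃)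
      < Real.sqrt 2 := by
  obtain ⟨hη0, hη1⟩ := hη
  -- the maximally mixed state
  have hρ : IsDensity ((1/2 : ℂ) • (1 : Mat2)) := by
    refine ⟨Matrix.posSemidef_iff_dotProduct_mulVec.mpr ⟨?_, ?_⟩, ?_⟩
    · ext i j
      fin_cases i <;> fin_cases j <;>
        simp [Matrix.conjTranspose_apply, Matrix.one_apply]
    · intro x
      have hm : ((1/2 : ℂ) • (1 : Mat2)) *ᵥ x = (1/2 : ℂ) • x := by
        rw [Matrix.smul_mulVec, Matrix.one_mulVec]
      rw [hm, dotProduct_smul]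
      have := dotProduct_star_self_nonneg x
      have h2 : (0:ℂ) ≤ (1/2 : ℂ) := by
        rw [Complex.le_def]; norm_num
      calc (0:ℂ) = (1/2 : ℂ) * 0 := by ring
        _ ≤ _ := by
          rw [smul_eq_mul]
          exact mul_le_mul_of_nonneg_left this h2
    · rw [Matrix.trace_smul, Matrix.trace_one]
      norm_num
  have hR := hviol _ hρ
  have tr_smul : ∀ M : Mat2, (((1/2 : ℂ) • (1 : Mat2)) * M).trace.re = (1/2) * M.trace.re := by
    intro M
    rw [smul_mul_assoc, one_mul, Matrix.trace_smul, smul_eq_mul, Complex.mul_re]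
    norm_num
  have t12 := anti_trace η n₁ n₂ _ _ _ _ h12
  have t13 := anti_trace η n₁ n₃ _ _ _ _ h13
  have t23 := anti_trace η n₂ n₃ _ _ _ _ h23
  unfold R3 at hR
  rw [tr_smul, tr_smul, tr_smul, t12, t13, t23] at hR
  have hsum : G12pp.trace.re + G13pp.trace.re + G23pp.trace.re < η := by linarith
  -- unit norms
  have hd1 : dot3 n₁ n₁ = 1 := by
    have h := Real.sq_sqrt (dot3_self_nonneg n₁)
    unfold norm3 at h1; rw [h1] at h; simpa using h.symm
  have hd2 : dot3 n₂ n₂ = 1 := by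
    have h := Real.sq_sqrt (dot3_self_nonneg n₂)
    unfold norm3 at h2; rw [h2] at h; simpa using h.symm
  have hd3 : dot3 n₃ n₃ = 1 := by
    have h := Real.sq_sqrt (dot3_self_nonneg n₃)
    unfold norm3 at h3; rw [h3] at h; simpa using h.symm
  have expand : ∀ a b : Fin 3 → ℝ, dot3 a a = 1 → dot3 b b = 1 →
      dot3 (a + b) (a + b) = 2 * (1 + dot3 a b) := by
    intro a b haa hbb
    have : dot3 (a + b) (a + b) = dot3 a a + 2 * dot3 a b + dot3 b b := by
      simp only [dot3, Pi.add_apply]; ring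
    rw [this, haa, hbb]; ring
  have hs12 : Real.sqrt (dot3 (n₁ + n₂) (n₁ + n₂))
      = Real.sqrt 2 * Real.sqrt (1 + dot3 n₁ n₂) := by
    rw [expand n₁ n₂ hd1 hd2, Real.sqrt_mul (by norm_num)]
  have hs13 : Real.sqrt (dot3 (n₁ + n₃) (n₁ + n₃))
      = Real.sqrt 2 * Real.sqrt (1 + dot3 n₁ n₃) := by
    rw [expand n₁ n₃ hd1 hd3, Real.sqrt_mul (by norm_num)]
  have hs23 : Real.sqrt (dot3 (n₂ + n₃) (n₂ + n₃))
      = Real.sqrt 2 * Real.sqrt (1 + dot3 n₂ n₃) := by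
    rw [expand n₂ n₃ hd2 hd3, Real.sqrt_mul (by norm_num)]
  have b12 := pair_bound η hη0.le n₁ n₂ _ _ _ _ h12
  have b13 := pair_bound η hη0.le n₁ n₃ _ _ _ _ h13
  have b23 := pair_bound η hη0.le n₂ n₃ _ _ _ _ h23
  rw [hs12] at b12; rw [hs13] at b13; rw [hs23] at b23
  set x := Real.sqrt (1 + dot3 n₁ n₂)
  set y := Real.sqrt (1 + dot3 n₁ n₃)
  set z := Real.sqrt (1 + dot3 n₂ n₃)
  have hmain : Real.sqrt 2 * (x + y + z) < 2 := by
    have h1' : η * (Real.sqrt 2 * (x + y + z)) < η * 2 := by nlinarith [b12, b13, b23, hsum]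
    exact lt_of_mul_lt_mul_left h1' hη0.le
  have h2' : Real.sqrt 2 * Real.sqrt 2 = 2 := Real.mul_self_sqrt (by norm_num)
  have hpos : (0:ℝ) < Real.sqrt 2 := by positivity
  nlinarith [hmain, h2', hpos]


end
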